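/- Let d ≥ 1 and let g : ℝ^d → ℂ be real-analytic on all of ℝ^d. Then the function R ↦ ∫_{|y| ≤ R} g(y) dy (integration over the closed Euclidean ball of radius R with respect to Lebesgue measure) is real-analytic on (0, ∞). -/

import Mathlib

open MeasureTheory Metric

open scoped ENNReal NNReal Nat

lemma uniform_series_aux {E F : Type*} [NormedAddCommGroup E] [NormedSpace ℝ E]
    [NormedAddCommGroup F] [NormedSpace ℝ F] [CompleteSpace F]
    {g : E → F} (hg : AnalyticOnNhd ℝ g Set.univ) {K : Set E} (hK : IsCompact K)
    (hKne : K.Nonempty) :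
    ∃ (r : ℝ≥0) (C : ℝ≥0), 0 < r ∧ ∀ x ∈ K, ∃ p : FormalMultilinearSeries ℝ E F,
      HasFPowerSeriesOnBall g p x r ∧ ∀ n, ‖p n‖₊ * r ^ n ≤ C := by
  choose p hp using fun x : E => (hg x trivial)
  choose ρ hρ using fun x : E => hp x
  have hs : ∀ x : E, ∃ s : ℝ≥0, 0 < s ∧ (4 * (s : ℝ≥0∞)) < ρ x := by
    intro x
    obtain ⟨u, hu0, hu⟩ := ENNReal.lt_iff_exists_nnreal_btwn.1
      (lt_min (hρ x).r_pos (zero_lt_one (α := ℝ≥0∞)))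
    have hu0' : 0 < u := by exact_mod_cast hu0
    refine ⟨u / 4, by positivity, ?_⟩
    have h4 : (4 : ℝ≥0∞) * ((u / 4 : ℝ≥0) : ℝ≥0∞) = (u : ℝ≥0∞) := by
      have : (4 : ℝ≥0) * (u / 4) = u := by
        rw [mul_comm, div_mul_cancel₀]
        norm_num
      rw [show ((4:ℝ≥0∞)) = ((4 : ℝ≥0) : ℝ≥0∞) by norm_num, ← ENNReal.coe_mul, this]
    rw [h4]
    exact hu.trans_le (min_le_left _ _)
  choose s hs0 hs4 using hs
  obtain ⟨t, htK, htcov⟩ := hK.elim_nhds_subcover (fun x => ball x (s x))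
    (fun x _ => ball_mem_nhds x (by exact_mod_cast hs0 x))
  have htne : t.Nonempty := by
    obtain ⟨x, hx⟩ := hKne
    obtain ⟨x₀, hx₀t, -⟩ := Set.mem_iUnion₂.1 (htcov hx)
    exact ⟨x₀, hx₀t⟩
  set B : E → ℝ≥0 := fun x₀ =>
    ∑' σ : Σ k l : ℕ, { u : Finset (Fin (k + l)) // u.card = l },
      ‖p x₀ (σ.1 + σ.2.1)‖₊ * s x₀ ^ σ.2.1 * s x₀ ^ σ.1 with hB
  have hssum : ∀ x₀ : E, ((s x₀ : ℝ≥0∞) + s x₀) < (p x₀).radius := by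
    intro x₀
    have h1 : ((s x₀ : ℝ≥0∞) + s x₀) ≤ 4 * s x₀ := by
      rw [← two_mul]
      exact mul_le_mul_left (by norm_num) _
    exact lt_of_le_of_lt h1 ((hs4 x₀).trans_le (hρ x₀).r_le)
  have hsum : ∀ x₀ : E,
      Summable (fun σ : Σ k l : ℕ, { u : Finset (Fin (k + l)) // u.card = l } =>
        ‖p x₀ (σ.1 + σ.2.1)‖₊ * s x₀ ^ σ.2.1 * s x₀ ^ σ.1) :=
    fun x₀ => (p x₀).changeOriginSeries_summable_aux₁ (hssum x₀)
  refine ⟨t.inf' htne s, t.sup B, ?_, ?_⟩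
  · rw [Finset.lt_inf'_iff]
    exact fun x _ => hs0 x
  intro x hx
  obtain ⟨x₀, hx₀t, hxball⟩ := Set.mem_iUnion₂.1 (htcov hx)
  have hxs : ‖x - x₀‖₊ < s x₀ := by
    rw [mem_ball, dist_eq_norm] at hxball
    exact_mod_cast hxball
  have hs_le : (s x₀ : ℝ≥0∞) ≤ 4 * s x₀ :=
    le_mul_of_one_le_left zero_le (by norm_num)
  have hradx : (‖x - x₀‖₊ : ℝ≥0∞) < ρ x₀ :=
    lt_of_lt_of_le (ENNReal.coe_lt_coe.2 hxs) (hs_le.trans (hs4 x₀).le)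
  set q : FormalMultilinearSeries ℝ E F := (p x₀).changeOrigin (x - x₀) with hqdef
  have hq0 : HasFPowerSeriesOnBall g q x (ρ x₀ - ‖x - x₀‖₊) := by
    have h := (hρ x₀).changeOrigin hradx
    have h2 : x₀ + (x - x₀) = x := by abel
    rwa [h2] at h
  have hrles : (t.inf' htne s : ℝ≥0) ≤ s x₀ := Finset.inf'_le s hx₀t
  have hq : HasFPowerSeriesOnBall g q x ((t.inf' htne s : ℝ≥0) : ℝ≥0∞) := by
    refine hq0.mono ?_ ?_
    · have : (0 : ℝ≥0) < t.inf' htne s := by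
        rw [Finset.lt_inf'_iff]; exact fun x _ => hs0 x
      exact_mod_cast this
    · refine ENNReal.le_sub_of_add_le_right ENNReal.coe_ne_top ?_
      calc ((t.inf' htne s : ℝ≥0) : ℝ≥0∞) + ‖x - x₀‖₊
          ≤ (s x₀ : ℝ≥0∞) + s x₀ := add_le_add (ENNReal.coe_le_coe.2 hrles)
            (ENNReal.coe_le_coe.2 hxs.le)
        _ ≤ 4 * s x₀ := by rw [← two_mul]; exact mul_le_mul_left (by norm_num) _
        _ ≤ ρ x₀ := (hs4 x₀).le
  refine ⟨q, hq, ?_⟩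
  intro n
  have hsum₂ : Summable (fun σ : Σ l : ℕ, { u : Finset (Fin (n + l)) // u.card = l } =>
      ‖p x₀ (n + σ.1)‖₊ * s x₀ ^ σ.1) :=
    (p x₀).changeOriginSeries_summable_aux₂
      (lt_of_le_of_lt (le_add_self) (hssum x₀)) n
  have h1 : ‖q n‖₊ ≤ ∑' σ : Σ l : ℕ, { u : Finset (Fin (n + l)) // u.card = l },
      ‖p x₀ (n + σ.1)‖₊ * ‖x - x₀‖₊ ^ σ.1 :=
    (p x₀).nnnorm_changeOrigin_le n (hradx.trans_le (hρ x₀).r_le)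
  have h2 : (∑' σ : Σ l : ℕ, { u : Finset (Fin (n + l)) // u.card = l },
      ‖p x₀ (n + σ.1)‖₊ * ‖x - x₀‖₊ ^ σ.1)
      ≤ ∑' σ : Σ l : ℕ, { u : Finset (Fin (n + l)) // u.card = l },
      ‖p x₀ (n + σ.1)‖₊ * s x₀ ^ σ.1 := by
    refine Summable.tsum_le_tsum (fun σ => ?_) (NNReal.summable_of_le (fun σ => ?_) hsum₂) hsum₂
    · exact mul_le_mul_right (pow_le_pow_left₀ zero_le hxs.le _) _
    · exact mul_le_mul_right (pow_le_pow_left₀ zero_le hxs.le _) _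
  have h3 : (∑' σ : Σ l : ℕ, { u : Finset (Fin (n + l)) // u.card = l },
      ‖p x₀ (n + σ.1)‖₊ * s x₀ ^ σ.1) * s x₀ ^ n ≤ B x₀ := by
    rw [← ENNReal.coe_le_coe, hB]
    rw [ENNReal.coe_tsum (hsum x₀), ENNReal.coe_mul, ENNReal.coe_tsum hsum₂]
    rw [← ENNReal.tsum_mul_right]
    rw [ENNReal.tsum_sigma' (f := fun σ : Σ k l : ℕ,
        { u : Finset (Fin (k + l)) // u.card = l } =>
        ((‖p x₀ (σ.1 + σ.2.1)‖₊ * s x₀ ^ σ.2.1 * s x₀ ^ σ.1 : ℝ≥0) : ℝ≥0∞))]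
    refine le_trans (le_of_eq (tsum_congr fun σ => ?_)) (ENNReal.le_tsum n)
    rw [← ENNReal.coe_mul]
  calc ‖q n‖₊ * (t.inf' htne s) ^ n
      ≤ (∑' σ : Σ l : ℕ, { u : Finset (Fin (n + l)) // u.card = l },
        ‖p x₀ (n + σ.1)‖₊ * s x₀ ^ σ.1) * s x₀ ^ n :=
        mul_le_mul' (h1.trans h2) (pow_le_pow_left₀ zero_le hrles n)
    _ ≤ B x₀ := h3
    _ ≤ t.sup B := Finset.le_sup hx₀t

lemma phi_analyticAt (d : ℕ) (g : EuclideanSpace ℝ (Fin d) → ℂ)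
    (hg : AnalyticOnNhd ℝ g Set.univ) (R₀ : ℝ) :
    AnalyticAt ℝ
      (fun R : ℝ => ∫ y in closedBall (0 : EuclideanSpace ℝ (Fin d)) 1, g (R • y)) R₀ := by
  set B1 : Set (EuclideanSpace ℝ (Fin d)) := closedBall 0 1 with hB1
  have hB1c : IsCompact B1 := isCompact_closedBall _ _
  have hK : IsCompact ((fun y : EuclideanSpace ℝ (Fin d) => R₀ • y) '' B1) :=
    hB1c.image (continuous_const_smul R₀)
  have hKne : ((fun y : EuclideanSpace ℝ (Fin d) => R₀ • y) '' B1).Nonempty :=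
    ⟨R₀ • 0, Set.mem_image_of_mem _ (mem_closedBall_self zero_le_one)⟩
  obtain ⟨r, C, hr0, hrC⟩ := uniform_series_aux hg hK hKne
  have hr0' : (0 : ℝ) < (r : ℝ) := hr0
  set c : ℕ → EuclideanSpace ℝ (Fin d) → ℂ := fun n y =>
    (n ! : ℝ)⁻¹ • iteratedFDeriv ℝ n g (R₀ • y) (fun _ => y) with hc
  have hc_cont : ∀ n, Continuous (c n) := by
    intro n
    have h1 : Continuous (iteratedFDeriv ℝ n g) := by
      rw [continuous_iff_continuousAt]
      exact fun x => ((hg.iteratedFDeriv n) x trivial).continuousAt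
    have h2 : Continuous fun y : EuclideanSpace ℝ (Fin d) =>
        iteratedFDeriv ℝ n g (R₀ • y) := h1.comp (continuous_const_smul R₀)
    have h3 : Continuous fun y : EuclideanSpace ℝ (Fin d) => (fun _ : Fin n => y) :=
      continuous_pi fun _ => continuous_id
    exact (continuous_eval.comp (h2.prodMk h3)).const_smul ((n ! : ℝ)⁻¹)
  have hcb : ∀ (n : ℕ), ∀ y ∈ B1, ‖c n y‖ ≤ (C : ℝ) / (r : ℝ) ^ n := by
    intro n y hy
    obtain ⟨p, hp, hpb⟩ := hrC _ (Set.mem_image_of_mem _ hy)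
    have hfac := hp.factorial_smul y n
    have hcny : c n y = p n (fun _ => y) := by
      rw [hc]
      simp only
      rw [← hfac, ← Nat.cast_smul_eq_nsmul ℝ,
        inv_smul_smul₀ (by exact_mod_cast n.factorial_ne_zero)]
    have hb : ‖p n‖ * (r : ℝ) ^ n ≤ (C : ℝ) := by exact_mod_cast hpb n
    have hrpos : (0 : ℝ) < (r : ℝ) ^ n := pow_pos hr0' n
    have hy1 : ‖y‖ ≤ 1 := mem_closedBall_zero_iff.1 hy
    calc ‖c n y‖ = ‖p n (fun _ => y)‖ := by rw [hcny]
      _ ≤ ‖p n‖ * ∏ _i : Fin n, ‖y‖ := (p n).le_opNorm _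
      _ ≤ ‖p n‖ * 1 := by
          refine mul_le_mul_of_nonneg_left ?_ (norm_nonneg _)
          rw [Finset.prod_const]
          exact pow_le_one₀ (norm_nonneg _) hy1
      _ = ‖p n‖ := mul_one _
      _ ≤ (C : ℝ) / (r : ℝ) ^ n := (le_div_iff₀ hrpos).2 hb
  have hμB1 : volume B1 < ⊤ := hB1c.measure_lt_top
  have hInt : ∀ n, IntegrableOn (c n) B1 := fun n =>
    (hc_cont n).continuousOn.integrableOn_compact hB1c
  set a : ℕ → ℂ := fun n => ∫ y in B1, c n y with ha
  set q : FormalMultilinearSeries ℝ ℝ ℂ := fun n =>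
    ContinuousMultilinearMap.mkPiRing ℝ (Fin n) (a n) with hqdef
  set M : ℝ := (volume B1).toReal with hM
  have hM0 : 0 ≤ M := ENNReal.toReal_nonneg
  have hanorm : ∀ n, ‖a n‖ ≤ ((C : ℝ) / (r : ℝ) ^ n) * M :=
    fun n => norm_setIntegral_le_of_norm_le_const hμB1 (fun y hy => hcb n y hy)
  have hqn : ∀ n, ‖q n‖ = ‖a n‖ := fun n =>
    ContinuousMultilinearMap.norm_mkPiRing (a n)
  have hball : HasFPowerSeriesOnBall
      (fun R : ℝ => ∫ y in closedBall (0 : EuclideanSpace ℝ (Fin d)) 1, g (R • y))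
      q R₀ ((r / 2 : ℝ≥0) : ℝ≥0∞) := by
    constructor
    · -- radius
      refine FormalMultilinearSeries.le_radius_of_bound q ((C : ℝ) * M) (fun n => ?_)
      have h2 : ((r / 2 : ℝ≥0) : ℝ) = (r : ℝ) / 2 := by push_cast; ring
      rw [hqn, h2]
      calc ‖a n‖ * ((r : ℝ) / 2) ^ n
          ≤ ((C : ℝ) / (r : ℝ) ^ n * M) * ((r : ℝ) / 2) ^ n := by
            refine mul_le_mul_of_nonneg_right (hanorm n) (by positivity)
        _ = (C : ℝ) * M * (1 / 2) ^ n := by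
            rw [div_pow]
            field_simp
            rw [mul_assoc, ← mul_pow]; norm_num
        _ ≤ (C : ℝ) * M := by
            refine mul_le_of_le_one_right (by positivity) ?_
            exact pow_le_one₀ (by norm_num) (by norm_num)
    · -- r_pos
      exact_mod_cast half_pos hr0
    · -- hasSum
      intro t ht
      have htn : ‖t‖₊ < r / 2 := by
        rw [EMetric.mem_ball, edist_zero_right] at ht
        exact_mod_cast ht
      have htr : ‖t‖ < (r : ℝ) := by
        have h1 : (‖t‖₊ : ℝ) < ((r / 2 : ℝ≥0) : ℝ) := htn
        have h2 : ((r / 2 : ℝ≥0) : ℝ) = (r : ℝ) / 2 := by push_cast; ring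
        rw [h2] at h1
        have := half_lt_self hr0'
        simpa using h1.trans this
      have hps : ∀ y ∈ B1, HasSum (fun n => t ^ n • c n y) (g ((R₀ + t) • y)) := by
        intro y hy
        obtain ⟨p, hp, -⟩ := hrC _ (Set.mem_image_of_mem _ hy)
        have hy1 : ‖y‖ ≤ 1 := mem_closedBall_zero_iff.1 hy
        have hty : t • y ∈ Metric.eball (0 : EuclideanSpace ℝ (Fin d)) r := by
          rw [mem_emetric_ball_zero_iff]
          have h1 : ‖t • y‖ ≤ ‖t‖ := by
            rw [norm_smul]
            exact mul_le_of_le_one_right (norm_nonneg _) hy1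
          have h2 : ‖t • y‖₊ < r := by
            have : ‖t • y‖ < (r : ℝ) := lt_of_le_of_lt h1 htr
            exact_mod_cast this
          exact_mod_cast h2
        have h := hp.hasSum_iteratedFDeriv hty
        have heq : (fun n => (n ! : ℝ)⁻¹ •
            iteratedFDeriv ℝ n g (R₀ • y) (fun _ => t • y))
            = fun n => t ^ n • c n y := by
          funext n
          have hml : iteratedFDeriv ℝ n g (R₀ • y) (fun _ => t • y)
              = t ^ n • iteratedFDeriv ℝ n g (R₀ • y) (fun _ => y) := by
            have h5 := (iteratedFDeriv ℝ n g (R₀ • y)).map_smul_univ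
              (fun _ : Fin n => t) (fun _ => y)
            simpa [Finset.prod_const] using h5
          rw [hml, hc]
          simp only
          rw [smul_comm]
        rw [heq] at h
        have hg2 : R₀ • y + t • y = (R₀ + t) • y := (add_smul R₀ t y).symm
        rwa [hg2] at h
      have hint2 : ∀ n : ℕ, Integrable (fun y => t ^ n • c n y) (volume.restrict B1) :=
        fun n => (hInt n).smul (t ^ n)
      have hratio : ‖t‖ / (r : ℝ) < 1 := (div_lt_one hr0').2 htr
      have hnormint : ∀ n : ℕ, ∫ y in B1, ‖t ^ n • c n y‖
          ≤ (M * (C : ℝ)) * (‖t‖ / (r : ℝ)) ^ n := by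
        intro n
        have hb : ∀ y ∈ B1, ‖t ^ n • c n y‖ ≤ |t| ^ n * ((C : ℝ) / (r : ℝ) ^ n) := by
          intro y hy
          rw [norm_smul, norm_pow]
          exact mul_le_mul_of_nonneg_left (hcb n y hy) (by positivity)
        calc ∫ y in B1, ‖t ^ n • c n y‖
            ≤ ∫ _y in B1, |t| ^ n * ((C : ℝ) / (r : ℝ) ^ n) := by
              refine setIntegral_mono_on (hint2 n).norm ?_ measurableSet_closedBall hb
              exact integrableOn_const hμB1.ne
          _ = M * (|t| ^ n * ((C : ℝ) / (r : ℝ) ^ n)) := by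
              rw [setIntegral_const, smul_eq_mul]
              rfl
          _ = (M * (C : ℝ)) * (‖t‖ / (r : ℝ)) ^ n := by
              rw [Real.norm_eq_abs, div_pow]
              field_simp
      have hsumnorm : Summable (fun n => ∫ y in B1, ‖t ^ n • c n y‖) := by
        refine Summable.of_nonneg_of_le
          (fun n => integral_nonneg fun y => norm_nonneg _) hnormint ?_
        exact (summable_geometric_of_lt_one (by positivity) hratio).mul_left _
      have hkey := MeasureTheory.hasSum_integral_of_summable_integral_norm
        (μ := volume.restrict B1) hint2 hsumnorm
      have htsum : ∫ y in B1, (∑' n, t ^ n • c n y) = ∫ y in B1, g ((R₀ + t) • y) := by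
        refine setIntegral_congr_fun measurableSet_closedBall (fun y hy => ?_)
        exact (hps y hy).tsum_eq
      rw [htsum] at hkey
      have hfun : (fun n => q n fun _ => t) = fun n => ∫ y in B1, t ^ n • c n y := by
        funext n
        rw [hqdef]
        simp only [ContinuousMultilinearMap.mkPiRing_apply, Finset.prod_const,
          Finset.card_univ, Fintype.card_fin]
        rw [ha, integral_smul]
      rw [hfun]
      exact hkey
  exact hball.analyticAt

/-- If `g : ℝ^d → ℂ` is real-analytic on all of `ℝ^d`, then
`R ↦ ∫_{|y| ≤ R} g(y) dy` is real-analytic on `(0, ∞)`. -/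
theorem integral_over_ball_analytic (d : ℕ) (hd : 1 ≤ d)
    (g : EuclideanSpace ℝ (Fin d) → ℂ)
    (hg : AnalyticOnNhd ℝ g Set.univ) :
    AnalyticOnNhd ℝ
      (fun R : ℝ => ∫ y in closedBall (0 : EuclideanSpace ℝ (Fin d)) R, g y)
      (Set.Ioi 0) := by
  set Φ : ℝ → ℂ := fun R =>
    ∫ y in closedBall (0 : EuclideanSpace ℝ (Fin d)) 1, g (R • y) with hΦ
  have hscale : ∀ R : ℝ, 0 < R →
      (∫ y in closedBall (0 : EuclideanSpace ℝ (Fin d)) R, g y) = R ^ d • Φ R := by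
    intro R hR
    have hfr : Module.finrank ℝ (EuclideanSpace ℝ (Fin d)) = d := finrank_euclideanSpace_fin
    have h1 := Measure.integral_comp_smul (volume : Measure (EuclideanSpace ℝ (Fin d)))
      ((closedBall (0 : EuclideanSpace ℝ (Fin d)) R).indicator g) R
    rw [hfr] at h1
    have hmem : ∀ y : EuclideanSpace ℝ (Fin d),
        (R • y ∈ closedBall (0 : EuclideanSpace ℝ (Fin d)) R) ↔
          y ∈ closedBall (0 : EuclideanSpace ℝ (Fin d)) 1 := by
      intro y
      rw [mem_closedBall_zero_iff, mem_closedBall_zero_iff, norm_smul, Real.norm_eq_abs,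
        abs_of_pos hR]
      exact mul_le_iff_le_one_right hR
    have h2 : (fun y => ((closedBall (0 : EuclideanSpace ℝ (Fin d)) R).indicator g) (R • y))
        = (closedBall (0 : EuclideanSpace ℝ (Fin d)) 1).indicator (fun y => g (R • y)) := by
      funext y
      by_cases hy : y ∈ closedBall (0 : EuclideanSpace ℝ (Fin d)) 1
      · rw [Set.indicator_of_mem hy]
        exact Set.indicator_of_mem ((hmem y).2 hy) g
      · rw [Set.indicator_of_notMem hy]
        exact Set.indicator_of_notMem (fun hmm => hy ((hmem y).1 hmm)) g
    rw [h2, integral_indicator measurableSet_closedBall,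
      integral_indicator measurableSet_closedBall] at h1
    rw [abs_of_pos (by positivity)] at h1
    rw [hΦ]
    simp only
    rw [h1, smul_smul, mul_inv_cancel₀ (by positivity), one_smul]
  intro R hR
  have hR' : (0 : ℝ) < R := hR
  have hA : AnalyticAt ℝ (fun R : ℝ => R ^ d • Φ R) R :=
    ((analyticAt_id (𝕜 := ℝ) (E := ℝ) (z := R)).pow d).smul (phi_analyticAt d g hg R)
  refine hA.congr ?_
  filter_upwards [isOpen_Ioi.mem_nhds hR'] with R' hR2
  exact (hscale R' hR2).symm
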